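/- Let G be a finite group, p : E → G a surjective group homomorphism with kernel contained in the center of E, and V a finite-dimensional complex vector space. Suppose ρ, ρ' : E → GL(V) are representations that descend to projective representations ρ̄, ρ̄' : G → PGL(V) (i.e., π ∘ ρ and π ∘ ρ' factor through p). Then ρ̄ and ρ̄' are similar (conjugate by an element of PGL(V)) if and only if there exists a group homomorphism ε : E → C^× such that ρ is equivalent, as a linear representation, to ε·ρ'. -/
import Mathlib

section Aux

variable {V : Type*} [AddCommGroup V] [Module ℂ V] [FiniteDimensional ℂ V]

/-- A central unit of `End ℂ V` is a nonzero scalar (when `V` is nontrivial). -/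
lemma aux_central_scalar [Nontrivial V] (z : (Module.End ℂ V)ˣ)
    (hz : z ∈ Subgroup.center (Module.End ℂ V)ˣ) :
    ∃ c : ℂˣ, z.val = (c : ℂ) • (1 : Module.End ℂ V) := by
  -- z.val commutes with every endomorphism
  have hcomm : ∀ f : Module.End ℂ V, f * z.val = z.val * f := by
    intro f
    obtain ⟨c, hc⟩ := (Module.End.finite_spectrum f).infinite_compl.nonempty
    have hu : IsUnit (algebraMap ℂ (Module.End ℂ V) c - f) := spectrum.notMem_iff.mp hc
    obtain ⟨u, hu⟩ := hu
    have h1 : u * z = z * u := Subgroup.mem_center_iff.mp hz u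
    have h2 : u.val * z.val = z.val * u.val := by
      exact_mod_cast congrArg Units.val h1
    have hf : f = algebraMap ℂ (Module.End ℂ V) c - u.val := by rw [hu, sub_sub_cancel]
    rw [hf, sub_mul, mul_sub, h2, Algebra.commutes]
  -- transfer to matrices
  let b := Module.finBasis ℂ V
  let A := algEquivMatrix b
  have hmem : A z.val ∈ Subalgebra.center ℂ (Matrix (Fin (Module.finrank ℂ V))
      (Fin (Module.finrank ℂ V)) ℂ) := by
    rw [Subalgebra.mem_center_iff]
    intro m
    have : m = A (A.symm m) := (A.apply_symm_apply m).symm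
    rw [this, ← map_mul, ← map_mul, hcomm]
  rw [Algebra.IsCentral.center_eq_bot, Algebra.mem_bot] at hmem
  obtain ⟨c, hc⟩ := hmem
  have hz' : z.val = algebraMap ℂ (Module.End ℂ V) c := by
    have := congrArg A.symm hc
    rw [A.symm_apply_apply, A.symm.commutes] at this
    exact this.symm
  have hc0 : c ≠ 0 := by
    rintro rfl
    have : z.val * z.inv = 1 := z.val_inv
    rw [hz'] at this
    simp only [map_zero, zero_mul] at this
    obtain ⟨v, hv⟩ := exists_ne (0 : V)
    apply hv
    calc v = (1 : Module.End ℂ V) v := rfl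
      _ = (0 : Module.End ℂ V) v := by rw [this]
      _ = 0 := rfl
  exact ⟨Units.mk0 c hc0, by rw [hz', Module.algebraMap_end_eq_smul_id]; rfl⟩

lemma aux_smul_one_inj [Nontrivial V] {c c' : ℂ}
    (h : c • (1 : Module.End ℂ V) = c' • (1 : Module.End ℂ V)) : c = c' := by
  obtain ⟨v, hv⟩ := exists_ne (0 : V)
  have h2 : c • v = c' • v := by
    have := congrArg (fun f : Module.End ℂ V => f v) h
    simpa using this
  exact smul_left_injective ℂ hv h2

lemma aux_smul_unit_inj [Nontrivial V] {c c' : ℂ} (x : (Module.End ℂ V)ˣ)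
    (h : c • x.val = c' • x.val) : c = c' := by
  apply aux_smul_one_inj (V := V)
  have := congrArg (· * x.inv) h
  simpa [smul_mul_assoc, x.val_inv] using this

end Aux

/-- Given a surjection p : E → G with central kernel and two linear representations
ρ, ρ' of E on V that descend to projective representations ρ̄, ρ̄' of G on PGL(V),
ρ̄ and ρ̄' are similar iff there is a homomorphism ε : E → ℂ^× such that ρ is
equivalent to ε·ρ'. -/
theorem stmt9 (E G : Type*) [Group E] [Finite E] [Group G] [Finite G]
    (V : Type*) [AddCommGroup V] [Module ℂ V] [FiniteDimensional ℂ V]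
    (p : E →* G) (hp : Function.Surjective p) (hker : p.ker ≤ Subgroup.center E)
    (ρ ρ' : E →* (Module.End ℂ V)ˣ)
    (ρbar ρbar' : G →* ((Module.End ℂ V)ˣ ⧸ Subgroup.center (Module.End ℂ V)ˣ))
    (hlift : ρbar.comp p = (QuotientGroup.mk' (Subgroup.center (Module.End ℂ V)ˣ)).comp ρ)
    (hlift' : ρbar'.comp p =
      (QuotientGroup.mk' (Subgroup.center (Module.End ℂ V)ˣ)).comp ρ') :
    (∃ L : (Module.End ℂ V)ˣ, ∀ g : G,
        QuotientGroup.mk' (Subgroup.center (Module.End ℂ V)ˣ) L * ρbar g *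
          (QuotientGroup.mk' (Subgroup.center (Module.End ℂ V)ˣ) L)⁻¹ = ρbar' g) ↔
    (∃ ε : E →* ℂˣ, ∃ L : (Module.End ℂ V)ˣ, ∀ e : E,
        (L * ρ e * L⁻¹).val = (ε e : ℂ) • (ρ' e).val) := by
  constructor
  · rintro ⟨L, hL⟩
    rcases subsingleton_or_nontrivial V with hV | hV
    · exact ⟨1, 1, fun e => Subsingleton.elim _ _⟩
    -- key: for each e, the conjugated rep differs from ρ' by a scalar
    have hex : ∀ e : E, ∃ d : ℂˣ, (L * ρ e * L⁻¹).val = (d : ℂ) • (ρ' e).val := by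
      intro e
      have h1 : ρbar (p e) = QuotientGroup.mk' _ (ρ e) := DFunLike.congr_fun hlift e
      have h2 : ρbar' (p e) = QuotientGroup.mk' _ (ρ' e) := DFunLike.congr_fun hlift' e
      have h3 := hL (p e)
      rw [h1, h2, ← map_inv, ← map_mul, ← map_mul, QuotientGroup.mk'_eq_mk'] at h3
      obtain ⟨zc, hzc_mem, hzc⟩ := h3
      obtain ⟨c, hc⟩ := aux_central_scalar zc hzc_mem
      refine ⟨c⁻¹, ?_⟩
      have : (L * ρ e * L⁻¹).val * zc.val = (ρ' e).val := by
        exact_mod_cast congrArg Units.val hzc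
      rw [hc] at this
      calc (L * ρ e * L⁻¹).val
          = ((L * ρ e * L⁻¹).val * ((c : ℂ) • 1)) * ((c⁻¹ : ℂˣ) : ℂ) • 1 := by
            simp [mul_smul_comm, smul_smul, ← mul_smul (α := ℂ)]
        _ = ((c⁻¹ : ℂˣ) : ℂ) • (ρ' e).val := by
            rw [this]; rw [mul_smul_comm, mul_one]
    choose d hd using hex
    have hmul : ∀ e₁ e₂ : E, d (e₁ * e₂) = d e₁ * d e₂ := by
      intro e₁ e₂
      have key : ((d (e₁ * e₂) : ℂ)) • (ρ' (e₁ * e₂)).val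
          = ((d e₁ * d e₂ : ℂˣ) : ℂ) • (ρ' (e₁ * e₂)).val := by
        rw [← hd (e₁ * e₂)]
        have : (L * ρ (e₁ * e₂) * L⁻¹) = (L * ρ e₁ * L⁻¹) * (L * ρ e₂ * L⁻¹) := by
          rw [map_mul]; group
        rw [this, Units.val_mul, hd e₁, hd e₂]
        rw [smul_mul_assoc, mul_smul_comm, smul_smul, map_mul, Units.val_mul,
          Units.val_mul]
      have := aux_smul_unit_inj (ρ' (e₁ * e₂)) key
      exact_mod_cast Units.ext this
    exact ⟨MonoidHom.mk' d hmul, L, hd⟩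
  · rintro ⟨ε, L, hL⟩
    refine ⟨L, fun g => ?_⟩
    obtain ⟨e, rfl⟩ := hp g
    have h1 : ρbar (p e) = QuotientGroup.mk' _ (ρ e) := DFunLike.congr_fun hlift e
    have h2 : ρbar' (p e) = QuotientGroup.mk' _ (ρ' e) := DFunLike.congr_fun hlift' e
    rw [h1, h2, ← map_inv, ← map_mul, ← map_mul, QuotientGroup.mk'_eq_mk']
    -- the scalar unit
    set su : (Module.End ℂ V)ˣ :=
      Units.map (algebraMap ℂ (Module.End ℂ V) : ℂ →* Module.End ℂ V) (ε e) with hsu_def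
    have hsu_val : su.val = algebraMap ℂ (Module.End ℂ V) (ε e : ℂ) := rfl
    have hsu_center : su ∈ Subgroup.center (Module.End ℂ V)ˣ := by
      rw [Subgroup.mem_center_iff]
      intro g
      apply Units.ext
      rw [Units.val_mul, Units.val_mul, hsu_val, Algebra.commutes]
    have hconj : L * ρ e * L⁻¹ = su * ρ' e := by
      apply Units.ext
      rw [Units.val_mul su (ρ' e), hsu_val, ← Algebra.smul_def]
      exact hL e
    refine ⟨su⁻¹, inv_mem hsu_center, ?_⟩
    rw [hconj, (Subgroup.mem_center_iff.mp hsu_center (ρ' e)).symm]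
    group
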